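/- In the Gibbs model without covariates, for any species i, the quantity log P(1,…,1) − log P(0,…,0) − [log P(y^{(i)}) − log P(0,…,0)] equals α_{i,l} + β_{l,co-pres}·deg_{G*}(i), where y^{(i)} denotes the configuration in which only species i is present. Hence α_{i,l} + β_{l,co-pres}·deg_{G*}(i) is identifiable from the distribution. -/
import Mathlib

open Finset Real

noncomputable def ind (b : Bool) : ℝ := if b then 1 else 0

noncomputable def edgeCP {V : Type*} [Fintype V] (G : SimpleGraph V) [DecidableRel G.Adj]
    (x : V → Bool) : ℝ :=
  ∑ e ∈ G.edgeFinset, Sym2.lift ⟨fun i j => ind (x i) * ind (x j), fun i j => by ring⟩ e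

noncomputable def edgeCA {V : Type*} [Fintype V] (G : SimpleGraph V) [DecidableRel G.Adj]
    (x : V → Bool) : ℝ :=
  ∑ e ∈ G.edgeFinset,
    Sym2.lift ⟨fun i j => (1 - ind (x i)) * (1 - ind (x j)), fun i j => by ring⟩ e

noncomputable def energy {V : Type*} [Fintype V] (G : SimpleGraph V) [DecidableRel G.Adj]
    (α : V → ℝ) (bcp bca : ℝ) (x : V → Bool) : ℝ :=
  (∑ i, α i * ind (x i)) + bcp * edgeCP G x + bca * edgeCA G x

noncomputable def Zconst {V : Type*} [Fintype V] [DecidableEq V] (G : SimpleGraph V)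
    [DecidableRel G.Adj] (α : V → ℝ) (bcp bca : ℝ) : ℝ :=
  ∑ x : V → Bool, Real.exp (energy G α bcp bca x)

noncomputable def gibbs {V : Type*} [Fintype V] [DecidableEq V] (G : SimpleGraph V)
    [DecidableRel G.Adj] (α : V → ℝ) (bcp bca : ℝ) (x : V → Bool) : ℝ :=
  Real.exp (energy G α bcp bca x) / Zconst G α bcp bca

lemma Zpos {V : Type*} [Fintype V] [DecidableEq V] (G : SimpleGraph V)
    [DecidableRel G.Adj] (α : V → ℝ) (bcp bca : ℝ) : 0 < Zconst G α bcp bca :=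
  Finset.sum_pos (fun x _ => Real.exp_pos _) ⟨fun _ => true, Finset.mem_univ _⟩

lemma log_gibbs {V : Type*} [Fintype V] [DecidableEq V] (G : SimpleGraph V)
    [DecidableRel G.Adj] (α : V → ℝ) (bcp bca : ℝ) (x : V → Bool) :
    Real.log (gibbs G α bcp bca x) = energy G α bcp bca x - Real.log (Zconst G α bcp bca) := by
  rw [gibbs, Real.log_div (Real.exp_ne_zero _) (ne_of_gt (Zpos G α bcp bca)), Real.log_exp]

lemma edgeCP_true {V : Type*} [Fintype V] (G : SimpleGraph V) [DecidableRel G.Adj] :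
    edgeCP G (fun _ => true) = (G.edgeFinset.card : ℝ) := by
  rw [edgeCP]
  rw [Finset.card_eq_sum_ones, Nat.cast_sum]
  refine Finset.sum_congr rfl fun e _ => ?_
  induction e using Sym2.ind with
  | _ a b => simp [ind]

lemma edgeCA_true {V : Type*} [Fintype V] (G : SimpleGraph V) [DecidableRel G.Adj] :
    edgeCA G (fun _ => true) = 0 := by
  rw [edgeCA]
  refine Finset.sum_eq_zero fun e _ => ?_
  induction e using Sym2.ind with
  | _ a b => simp [ind]

lemma edgeCP_y {V : Type*} [Fintype V] [DecidableEq V] (G : SimpleGraph V)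
    [DecidableRel G.Adj] (i : V) :
    edgeCP G (Function.update (fun _ => true) i false)
      = (G.edgeFinset.card : ℝ) - (G.degree i : ℝ) := by
  have h : edgeCP G (Function.update (fun _ => true) i false)
      = ∑ e ∈ G.edgeFinset, (if i ∈ e then (0:ℝ) else 1) := by
    rw [edgeCP]
    refine Finset.sum_congr rfl fun e _ => ?_
    induction e using Sym2.ind with
    | _ a b =>
      rw [Sym2.lift_mk]
      have hmem : (i ∈ s(a, b)) ↔ (a = i ∨ b = i) := by
        rw [Sym2.mem_iff]
        constructor <;> rintro (h | h) <;> simp [h]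
      simp only [hmem]
      by_cases ha : a = i <;> by_cases hb : b = i <;>
        simp [ind, Function.update, ha, hb]
  rw [h, Finset.sum_ite, Finset.sum_const, Finset.sum_const]
  have hdeg : (G.edgeFinset.filter fun e => i ∈ e).card = G.degree i := by
    rw [← SimpleGraph.incidenceFinset_eq_filter, SimpleGraph.card_incidenceFinset_eq_degree]
  have hcard : (G.edgeFinset.filter fun e => ¬ i ∈ e).card
      = G.edgeFinset.card - (G.edgeFinset.filter fun e => i ∈ e).card := by
    rw [eq_tsub_iff_add_eq_of_le (Finset.card_le_card (Finset.filter_subset _ _))]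
    rw [add_comm, Finset.card_filter_add_card_filter_not]
  have hle : G.degree i ≤ G.edgeFinset.card := by
    rw [← hdeg]; exact Finset.card_le_card (Finset.filter_subset _ _)
  rw [hcard, hdeg, smul_zero, zero_add, nsmul_eq_mul, mul_one, Nat.cast_sub hle]

lemma edgeCA_y {V : Type*} [Fintype V] [DecidableEq V] (G : SimpleGraph V)
    [DecidableRel G.Adj] (i : V) :
    edgeCA G (Function.update (fun _ => true) i false) = 0 := by
  rw [edgeCA]
  refine Finset.sum_eq_zero fun e he => ?_
  rw [SimpleGraph.mem_edgeFinset] at he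
  induction e using Sym2.ind with
  | _ a b =>
    rw [SimpleGraph.mem_edgeSet] at he
    have hab : a ≠ b := G.ne_of_adj he
    by_cases ha : a = i
    · have hb : b ≠ i := fun h => hab (ha.trans h.symm)
      simp [ind, Function.update, ha, hb]
    · simp [ind, Function.update, ha]

/-- for any species `i`, with `y⁽ⁱ⁾` the configuration in which only `i` is
absent (all other species present),
`[log P(all 1) − log P(all 0)] − [log P(y⁽ⁱ⁾) − log P(all 0)] = α_i + β_cp·deg(i)`. -/
theorem identifiability_alpha_beta {V : Type*} [Fintype V] [DecidableEq V]
    (G : SimpleGraph V) [DecidableRel G.Adj] (α : V → ℝ) (bcp bca : ℝ) (i : V) :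
    (Real.log (gibbs G α bcp bca (fun _ => true))
        - Real.log (gibbs G α bcp bca (fun _ => false)))
      - (Real.log (gibbs G α bcp bca (Function.update (fun _ => true) i false))
        - Real.log (gibbs G α bcp bca (fun _ => false))) =
      α i + bcp * (G.degree i : ℝ) := by
  simp only [log_gibbs]
  have key : energy G α bcp bca (fun _ => true)
      - energy G α bcp bca (Function.update (fun _ => true) i false)
      = α i + bcp * (G.degree i : ℝ) := by
    rw [energy, energy, edgeCP_true, edgeCA_true, edgeCP_y, edgeCA_y]
    have hsum : (∑ j, α j * ind true)
        - (∑ j, α j * ind (Function.update (fun _ => true) i false j)) = α i := by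
      rw [← Finset.sum_sub_distrib]
      rw [Finset.sum_eq_single i]
      · simp [ind, Function.update]
      · intro j _ hj; simp [ind, Function.update, hj]
      · intro h; exact absurd (Finset.mem_univ i) h
    linarith [hsum]
  linarith [key]
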